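/- Under the stepsize rule of Algorithm adaptive gradient descent-2 (α_k = min{√(2/3 + θ_{k-1}) α_{k-1}, α_{k-1}/√(max(2α_{k-1}²L_k² - 1, 0))}, θ_k = α_k/α_{k-1}), the iterates satisfy the Lyapunov inequality ‖x^{k+1}-x*‖² + ‖x^{k+1}-x^k‖² + α_k(2+3θ_k)(f(x^k)-f*) ≤ ‖x^k-x*‖² + ‖x^k-x^{k-1}‖² + 3α_kθ_k(f(x^{k-1})-f*). -/

import Mathlib

open scoped RealInnerProductSpace

/-- Stepsize rule of adaptive gradient descent-2:
`α_k = min{√(2/3+θ_{k-1})·α_{k-1}, α_{k-1}/√([2α_{k-1}²L_k²-1]_+)}`,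
with the convention `a/0 = +∞` (when the bracket is nonpositive
the second bound is inactive). -/
noncomputable def adgd2Step (αp θp Lk : ℝ) : ℝ :=
  if 2 * αp ^ 2 * Lk ^ 2 - 1 ≤ 0 then Real.sqrt (2 / 3 + θp) * αp
  else min (Real.sqrt (2 / 3 + θp) * αp) (αp / Real.sqrt (2 * αp ^ 2 * Lk ^ 2 - 1))

lemma adgd2Step_pos (αp θp Lk : ℝ) (hαp : 0 < αp) (hθp : 0 ≤ θp) :
    0 < adgd2Step αp θp Lk := by
  have h1 : 0 < Real.sqrt (2 / 3 + θp) * αp :=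
    mul_pos (Real.sqrt_pos.mpr (by linarith)) hαp
  unfold adgd2Step
  split_ifs with h
  · exact h1
  · exact lt_min h1 (div_pos hαp (Real.sqrt_pos.mpr (by linarith)))

lemma adgd2Step_key (αp θp Lk : ℝ) (hαp : 0 < αp) (hθp : 0 ≤ θp) :
    2 * (adgd2Step αp θp Lk) ^ 2 * Lk ^ 2 * αp ^ 2 ≤ αp ^ 2 + (adgd2Step αp θp Lk) ^ 2 := by
  unfold adgd2Step
  split_ifs with h
  · set β := Real.sqrt (2 / 3 + θp) * αp with hβ
    have hβ2 : 0 ≤ β ^ 2 := sq_nonneg β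
    nlinarith [mul_le_mul_of_nonneg_left (show 2 * αp ^ 2 * Lk ^ 2 ≤ 1 by linarith) hβ2,
      sq_nonneg αp]
  · push_neg at h
    have hb : 0 < 2 * αp ^ 2 * Lk ^ 2 - 1 := by linarith
    set γ := min (Real.sqrt (2 / 3 + θp) * αp) (αp / Real.sqrt (2 * αp ^ 2 * Lk ^ 2 - 1)) with hγ
    have hle : γ ≤ αp / Real.sqrt (2 * αp ^ 2 * Lk ^ 2 - 1) := min_le_right _ _
    have hs : 0 < Real.sqrt (2 * αp ^ 2 * Lk ^ 2 - 1) := Real.sqrt_pos.mpr hb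
    have h2 : γ * Real.sqrt (2 * αp ^ 2 * Lk ^ 2 - 1) ≤ αp := by
      rw [← le_div_iff₀ hs]; exact hle
    have hγ0 : 0 < γ := by
      rw [hγ]
      exact lt_min (mul_pos (Real.sqrt_pos.mpr (by linarith)) hαp) (div_pos hαp hs)
    have h3 : (γ * Real.sqrt (2 * αp ^ 2 * Lk ^ 2 - 1)) ^ 2 ≤ αp ^ 2 := by
      have := mul_le_mul_of_nonneg_left h2 (le_of_lt (mul_pos hγ0 hs))
      nlinarith
    rw [mul_pow, Real.sq_sqrt hb.le] at h3
    nlinarith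

/-- Gradient inequality for a convex differentiable function. -/
lemma grad_convex_ineq {d : ℕ}
    (f : EuclideanSpace ℝ (Fin d) → ℝ) (f' : EuclideanSpace ℝ (Fin d) → EuclideanSpace ℝ (Fin d))
    (hconv : ConvexOn ℝ Set.univ f)
    (hgrad : ∀ z, HasGradientAt f (f' z) z)
    (x y : EuclideanSpace ℝ (Fin d)) :
    f x + ⟪f' x, y - x⟫ ≤ f y := by
  set c : ℝ → EuclideanSpace ℝ (Fin d) := fun t => x + t • (y - x) with hc
  have hcd : ∀ t : ℝ, HasDerivAt c (y - x) t := by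
    intro t
    have h := ((hasDerivAt_id t).smul_const (y - x)).const_add x
    rw [one_smul] at h
    exact h
  have hc0 : c 0 = x := by simp [hc]
  have hc1 : c 1 = y := by simp [hc]
  have hφd : HasDerivAt (f ∘ c) ⟪f' x, y - x⟫ 0 := by
    have h1 : HasFDerivAt f (InnerProductSpace.toDual ℝ _ (f' x)) (c 0) := by
      rw [hc0]; exact (hgrad x).hasFDerivAt
    have h2 := h1.comp_hasDerivAt 0 (hcd 0)
    simpa using h2
  have hφc : ConvexOn ℝ Set.univ (f ∘ c) := by
    constructor
    · exact convex_univ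
    · intro a _ b _ wa wb hwa hwb hab
      simp only [smul_eq_mul, Function.comp_apply]
      have key : c (wa * a + wb * b) = wa • c a + wb • c b := by
        simp only [hc]
        rw [show wa • (x + a • (y - x)) + wb • (x + b • (y - x))
            = (wa + wb) • x + (wa * a + wb * b) • (y - x) by
          simp [smul_add, smul_smul, add_smul]; abel, hab, one_smul]
      rw [key]
      exact hconv.2 (Set.mem_univ (c a)) (Set.mem_univ (c b)) hwa hwb hab
  have hslope := hφc.le_slope_of_hasDerivAt (Set.mem_univ (0:ℝ)) (Set.mem_univ (1:ℝ))
    one_pos hφd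
  rw [slope_def_field] at hslope
  simp only [Function.comp_apply, hc0, hc1] at hslope
  rw [sub_zero, div_one] at hslope
  linarith

set_option maxHeartbeats 1000000 in
theorem adgd2_lyapunov_step {d : ℕ}
    (f : EuclideanSpace ℝ (Fin d) → ℝ) (f' : EuclideanSpace ℝ (Fin d) → EuclideanSpace ℝ (Fin d))
    (hconv : ConvexOn ℝ Set.univ f)
    (hgrad : ∀ z, HasGradientAt f (f' z) z)
    (αp θp : ℝ) (hαp : 0 < αp) (hθp : 0 ≤ θp)
    (xp xk x1 xstar : EuclideanSpace ℝ (Fin d))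
    (hmin : ∀ y, f xstar ≤ f y)
    (hxk : xk = xp - αp • f' xp) :
    let Lk := ‖f' xk - f' xp‖ / ‖xk - xp‖
    let αk := adgd2Step αp θp Lk
    let θk := αk / αp
    x1 = xk - αk • f' xk →
    ‖x1 - xstar‖ ^ 2 + ‖x1 - xk‖ ^ 2 + αk * (2 + 3 * θk) * (f xk - f xstar) ≤
      ‖xk - xstar‖ ^ 2 + ‖xk - xp‖ ^ 2 + 3 * αk * θk * (f xp - f xstar) := by
  intro Lk αk θk hx1
  have key := grad_convex_ineq f f' hconv hgrad
  have hαk : 0 < αk := adgd2Step_pos αp θp Lk hαp hθp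
  have hθk : 0 < θk := div_pos hαk hαp
  have hθα : θk * αp = αk := div_mul_cancel₀ αk (ne_of_gt hαp)
  have g2 : 2 * αk ^ 2 * Lk ^ 2 * αp ^ 2 ≤ αp ^ 2 + αk ^ 2 :=
    adgd2Step_key αp θp Lk hαp hθp
  have hLk0 : 0 ≤ Lk := div_nonneg (norm_nonneg _) (norm_nonneg _)
  -- Lipschitz-type bound from the definition of Lk
  have hL : ‖f' xk - f' xp‖ ≤ Lk * ‖xk - xp‖ := by
    by_cases hz : xk = xp
    · simp [hz]
    · have hnz : ‖xk - xp‖ ≠ 0 := norm_ne_zero_iff.mpr (sub_ne_zero.mpr hz)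
      exact le_of_eq (div_mul_cancel₀ _ hnz).symm
  -- geometric identities
  have hxkp : xk - xp = -(αp • f' xp) := by rw [hxk]; abel
  have hxpk : xp - xk = αp • f' xp := by rw [hxk]; abel
  have hx1k : x1 - xk = -(αk • f' xk) := by rw [hx1]; abel
  have hx1s : x1 - xstar = (xk - xstar) - αk • f' xk := by rw [hx1]; abel
  have e3 : ‖xk - xp‖ = αp * ‖f' xp‖ := by
    rw [hxkp, norm_neg, norm_smul, Real.norm_eq_abs, abs_of_pos hαp]
  have e2 : ‖x1 - xk‖ ^ 2 = αk ^ 2 * ‖f' xk‖ ^ 2 := by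
    rw [hx1k, norm_neg, norm_smul, Real.norm_eq_abs, abs_of_pos hαk, mul_pow]
  have e1 : ‖x1 - xstar‖ ^ 2
      = ‖xk - xstar‖ ^ 2 - 2 * αk * ⟪xk - xstar, f' xk⟫ + αk ^ 2 * ‖f' xk‖ ^ 2 := by
    rw [hx1s, norm_sub_sq_real, real_inner_smul_right, norm_smul, Real.norm_eq_abs,
      abs_of_pos hαk, mul_pow]
    ring
  have eD : ‖f' xk - f' xp‖ ^ 2
      = ‖f' xk‖ ^ 2 - 2 * ⟪f' xk, f' xp⟫ + ‖f' xp‖ ^ 2 := norm_sub_sq_real _ _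
  -- convexity inequalities
  have f1 : f xk - f xstar ≤ ⟪xk - xstar, f' xk⟫ := by
    have h := key xk xstar
    rw [show xstar - xk = -(xk - xstar) by abel, inner_neg_right, real_inner_comm] at h
    linarith
  have f2 : αp * ⟪f' xk, f' xp⟫ ≤ f xp - f xk := by
    have h := key xk xp
    rw [hxpk, real_inner_smul_right] at h
    linarith
  have f3 : f xp - f xk ≤ αp * ‖f' xp‖ ^ 2 := by
    have h := key xp xk
    rw [hxkp, inner_neg_right, real_inner_smul_right, real_inner_self_eq_norm_sq] at h
    linarith
  -- squared Lipschitz bound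
  have hL2 : ‖f' xk - f' xp‖ ^ 2 ≤ Lk ^ 2 * αp ^ 2 * ‖f' xp‖ ^ 2 := by
    have h := pow_le_pow_left₀ (norm_nonneg _) hL 2
    rw [e3] at h
    calc ‖f' xk - f' xp‖ ^ 2 ≤ (Lk * (αp * ‖f' xp‖)) ^ 2 := h
      _ = Lk ^ 2 * αp ^ 2 * ‖f' xp‖ ^ 2 := by ring
  -- assembled inequalities for the final linear combination
  have hA : 2 * αk ^ 2 * (‖f' xk‖ ^ 2 - 2 * ⟪f' xk, f' xp⟫ + ‖f' xp‖ ^ 2)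
      ≤ 2 * αk ^ 2 * (Lk ^ 2 * αp ^ 2 * ‖f' xp‖ ^ 2) := by
    have : ‖f' xk‖ ^ 2 - 2 * ⟪f' xk, f' xp⟫ + ‖f' xp‖ ^ 2 ≤ Lk ^ 2 * αp ^ 2 * ‖f' xp‖ ^ 2 := by
      rw [← eD]; exact hL2
    exact mul_le_mul_of_nonneg_left this (by positivity)
  have hG2P : 2 * αk ^ 2 * Lk ^ 2 * αp ^ 2 * ‖f' xp‖ ^ 2
      ≤ (αp ^ 2 + αk ^ 2) * ‖f' xp‖ ^ 2 :=
    mul_le_mul_of_nonneg_right g2 (sq_nonneg _)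
  have hB : 4 * αk ^ 2 * ⟪f' xk, f' xp⟫ ≤ 4 * (αk * θk) * (f xp - f xk) := by
    have h := mul_le_mul_of_nonneg_left f2 (show (0:ℝ) ≤ 4 * (αk * θk) by positivity)
    calc 4 * αk ^ 2 * ⟪f' xk, f' xp⟫ = 4 * (αk * θk) * (αp * ⟪f' xk, f' xp⟫) := by
          rw [← hθα]; ring
      _ ≤ 4 * (αk * θk) * (f xp - f xk) := h
  have hC : αk * θk * (f xp - f xk) ≤ αk ^ 2 * ‖f' xp‖ ^ 2 := by
    have h := mul_le_mul_of_nonneg_left f3 (show (0:ℝ) ≤ αk * θk by positivity)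
    calc αk * θk * (f xp - f xk) ≤ αk * θk * (αp * ‖f' xp‖ ^ 2) := h
      _ = αk ^ 2 * ‖f' xp‖ ^ 2 := by rw [← hθα]; ring
  have hF1 : 2 * αk * (f xk - f xstar) ≤ 2 * αk * ⟪xk - xstar, f' xk⟫ :=
    mul_le_mul_of_nonneg_left f1 (by positivity)
  have e3sq : ‖xk - xp‖ ^ 2 = αp ^ 2 * ‖f' xp‖ ^ 2 := by rw [e3]; ring
  rw [e1, e2, e3sq]
  nlinarith [hA, hG2P, hB, hC, hF1]
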